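/- arXiv:1103.2825 — 4 statements merged into one kernel-verified Lean document; each statement's English description precedes it below -/
import Mathlib

section
/- The matrices B = [[0, s], [t, 1 - st]] and P = [[0, z], [z^{-1}, 0]] over ℤ[s^{±1}, t^{±1}, z^{±1}] satisfy the three mixed Yang–Baxter equations: P₁₂ P₂₃ B₁₂ = B₂₃ P₁₂ P₂₃, P₁₂ B₂₃ P₁₂ = P₂₃ B₁₂ P₂₃, and B₁₂ P₂₃ P₁₂ = P₂₃ P₁₂ B₂₃, where for a 2×2 matrix M, M₁₂ (resp. M₂₃) denotes the 3×3 matrix over R acting by M on coordinates (1,2) (resp. (2,3)) of R³ and by the identity on the remaining coordinate. -/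
/- STATEMENT 2: B = [[0, s], [t, 1 - st]] and P = [[0, z], [z^{-1}, 0]] over
ℤ[s^{±1}, t^{±1}, z^{±1}] satisfy the three mixed Yang–Baxter equations
P₁₂ P₂₃ B₁₂ = B₂₃ P₁₂ P₂₃,  P₁₂ B₂₃ P₁₂ = P₂₃ B₁₂ P₂₃,  B₁₂ P₂₃ P₁₂ = P₂₃ P₁₂ B₂₃. -/

open LaurentPolynomial

/-- `ℤ[s^{±1}, t^{±1}, z^{±1}]`: `s` outer, then `t`, then `z` innermost. -/
noncomputable abbrev R₂ : Type :=
  LaurentPolynomial (LaurentPolynomial (LaurentPolynomial ℤ))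

noncomputable def s₂ : R₂ := T 1
noncomputable def t₂ : R₂ := C (T 1)
noncomputable def z₂ : R₂ := C (C (T 1))
noncomputable def z₂inv : R₂ := C (C (T (-1)))

noncomputable def m12 (M : Matrix (Fin 2) (Fin 2) R₂) : Matrix (Fin 3) (Fin 3) R₂ :=
  !![M 0 0, M 0 1, 0; M 1 0, M 1 1, 0; 0, 0, 1]

noncomputable def m23 (M : Matrix (Fin 2) (Fin 2) R₂) : Matrix (Fin 3) (Fin 3) R₂ :=
  !![1, 0, 0; 0, M 0 0, M 0 1; 0, M 1 0, M 1 1]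

noncomputable def B₂ : Matrix (Fin 2) (Fin 2) R₂ := !![0, s₂; t₂, 1 - s₂ * t₂]

noncomputable def P₂ : Matrix (Fin 2) (Fin 2) R₂ := !![0, z₂; z₂inv, 0]

lemma hz : z₂ * z₂inv = 1 := by
  rw [z₂, z₂inv, ← map_mul, ← map_mul, ← T_add]; simp

lemma e0_0_0 : (m12 P₂ * m23 P₂ * m12 B₂) 0 0 = (m23 B₂ * m12 P₂ * m23 P₂) 0 0 := by
  simp [m12, m23, B₂, P₂, Matrix.mul_apply, Fin.sum_univ_three, Matrix.vecHead, Matrix.vecTail]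
  all_goals first | linear_combination (s₂ * t₂ - 1) * hz | ring

lemma e0_0_1 : (m12 P₂ * m23 P₂ * m12 B₂) 0 1 = (m23 B₂ * m12 P₂ * m23 P₂) 0 1 := by
  simp [m12, m23, B₂, P₂, Matrix.mul_apply, Fin.sum_univ_three, Matrix.vecHead, Matrix.vecTail]
  all_goals first | linear_combination (s₂ * t₂ - 1) * hz | ring

lemma e0_0_2 : (m12 P₂ * m23 P₂ * m12 B₂) 0 2 = (m23 B₂ * m12 P₂ * m23 P₂) 0 2 := by
  simp [m12, m23, B₂, P₂, Matrix.mul_apply, Fin.sum_univ_three, Matrix.vecHead, Matrix.vecTail]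
  all_goals first | linear_combination (s₂ * t₂ - 1) * hz | ring

lemma e0_1_0 : (m12 P₂ * m23 P₂ * m12 B₂) 1 0 = (m23 B₂ * m12 P₂ * m23 P₂) 1 0 := by
  simp [m12, m23, B₂, P₂, Matrix.mul_apply, Fin.sum_univ_three, Matrix.vecHead, Matrix.vecTail]
  all_goals first | linear_combination (s₂ * t₂ - 1) * hz | ring

lemma e0_1_1 : (m12 P₂ * m23 P₂ * m12 B₂) 1 1 = (m23 B₂ * m12 P₂ * m23 P₂) 1 1 := by
  simp [m12, m23, B₂, P₂, Matrix.mul_apply, Fin.sum_univ_three, Matrix.vecHead, Matrix.vecTail]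
  all_goals first | linear_combination (s₂ * t₂ - 1) * hz | ring

lemma e0_1_2 : (m12 P₂ * m23 P₂ * m12 B₂) 1 2 = (m23 B₂ * m12 P₂ * m23 P₂) 1 2 := by
  simp [m12, m23, B₂, P₂, Matrix.mul_apply, Fin.sum_univ_three, Matrix.vecHead, Matrix.vecTail]
  all_goals first | linear_combination (s₂ * t₂ - 1) * hz | ring

lemma e0_2_0 : (m12 P₂ * m23 P₂ * m12 B₂) 2 0 = (m23 B₂ * m12 P₂ * m23 P₂) 2 0 := by
  simp [m12, m23, B₂, P₂, Matrix.mul_apply, Fin.sum_univ_three, Matrix.vecHead, Matrix.vecTail]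
  all_goals first | linear_combination (s₂ * t₂ - 1) * hz | ring

lemma e0_2_1 : (m12 P₂ * m23 P₂ * m12 B₂) 2 1 = (m23 B₂ * m12 P₂ * m23 P₂) 2 1 := by
  simp [m12, m23, B₂, P₂, Matrix.mul_apply, Fin.sum_univ_three, Matrix.vecHead, Matrix.vecTail]
  all_goals first | linear_combination (s₂ * t₂ - 1) * hz | ring

lemma e0_2_2 : (m12 P₂ * m23 P₂ * m12 B₂) 2 2 = (m23 B₂ * m12 P₂ * m23 P₂) 2 2 := by
  simp [m12, m23, B₂, P₂, Matrix.mul_apply, Fin.sum_univ_three, Matrix.vecHead, Matrix.vecTail]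
  all_goals first | linear_combination (s₂ * t₂ - 1) * hz | ring

lemma eq0 : m12 P₂ * m23 P₂ * m12 B₂ = m23 B₂ * m12 P₂ * m23 P₂ :=
  Matrix.ext fun i j => by
    match i, j with
    | 0, 0 => exact e0_0_0
    | 0, 1 => exact e0_0_1
    | 0, 2 => exact e0_0_2
    | 1, 0 => exact e0_1_0
    | 1, 1 => exact e0_1_1
    | 1, 2 => exact e0_1_2
    | 2, 0 => exact e0_2_0
    | 2, 1 => exact e0_2_1
    | 2, 2 => exact e0_2_2

lemma e1_0_0 : (m12 P₂ * m23 B₂ * m12 P₂) 0 0 = (m23 P₂ * m12 B₂ * m23 P₂) 0 0 := by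
  simp [m12, m23, B₂, P₂, Matrix.mul_apply, Fin.sum_univ_three, Matrix.vecHead, Matrix.vecTail]
  all_goals first | linear_combination (s₂ * t₂ - 1) * hz | ring

lemma e1_0_1 : (m12 P₂ * m23 B₂ * m12 P₂) 0 1 = (m23 P₂ * m12 B₂ * m23 P₂) 0 1 := by
  simp [m12, m23, B₂, P₂, Matrix.mul_apply, Fin.sum_univ_three, Matrix.vecHead, Matrix.vecTail]
  all_goals first | linear_combination (s₂ * t₂ - 1) * hz | ring

lemma e1_0_2 : (m12 P₂ * m23 B₂ * m12 P₂) 0 2 = (m23 P₂ * m12 B₂ * m23 P₂) 0 2 := by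
  simp [m12, m23, B₂, P₂, Matrix.mul_apply, Fin.sum_univ_three, Matrix.vecHead, Matrix.vecTail]
  all_goals first | linear_combination (s₂ * t₂ - 1) * hz | ring

lemma e1_1_0 : (m12 P₂ * m23 B₂ * m12 P₂) 1 0 = (m23 P₂ * m12 B₂ * m23 P₂) 1 0 := by
  simp [m12, m23, B₂, P₂, Matrix.mul_apply, Fin.sum_univ_three, Matrix.vecHead, Matrix.vecTail]
  all_goals first | linear_combination (s₂ * t₂ - 1) * hz | ring

lemma e1_1_1 : (m12 P₂ * m23 B₂ * m12 P₂) 1 1 = (m23 P₂ * m12 B₂ * m23 P₂) 1 1 := by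
  simp [m12, m23, B₂, P₂, Matrix.mul_apply, Fin.sum_univ_three, Matrix.vecHead, Matrix.vecTail]
  all_goals first | linear_combination (s₂ * t₂ - 1) * hz | ring

lemma e1_1_2 : (m12 P₂ * m23 B₂ * m12 P₂) 1 2 = (m23 P₂ * m12 B₂ * m23 P₂) 1 2 := by
  simp [m12, m23, B₂, P₂, Matrix.mul_apply, Fin.sum_univ_three, Matrix.vecHead, Matrix.vecTail]
  all_goals first | linear_combination (s₂ * t₂ - 1) * hz | ring

lemma e1_2_0 : (m12 P₂ * m23 B₂ * m12 P₂) 2 0 = (m23 P₂ * m12 B₂ * m23 P₂) 2 0 := by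
  simp [m12, m23, B₂, P₂, Matrix.mul_apply, Fin.sum_univ_three, Matrix.vecHead, Matrix.vecTail]
  all_goals first | linear_combination (s₂ * t₂ - 1) * hz | ring

lemma e1_2_1 : (m12 P₂ * m23 B₂ * m12 P₂) 2 1 = (m23 P₂ * m12 B₂ * m23 P₂) 2 1 := by
  simp [m12, m23, B₂, P₂, Matrix.mul_apply, Fin.sum_univ_three, Matrix.vecHead, Matrix.vecTail]
  all_goals first | linear_combination (s₂ * t₂ - 1) * hz | ring

lemma e1_2_2 : (m12 P₂ * m23 B₂ * m12 P₂) 2 2 = (m23 P₂ * m12 B₂ * m23 P₂) 2 2 := by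
  simp [m12, m23, B₂, P₂, Matrix.mul_apply, Fin.sum_univ_three, Matrix.vecHead, Matrix.vecTail]
  all_goals first | linear_combination (s₂ * t₂ - 1) * hz | ring

lemma eq1 : m12 P₂ * m23 B₂ * m12 P₂ = m23 P₂ * m12 B₂ * m23 P₂ :=
  Matrix.ext fun i j => by
    match i, j with
    | 0, 0 => exact e1_0_0
    | 0, 1 => exact e1_0_1
    | 0, 2 => exact e1_0_2
    | 1, 0 => exact e1_1_0
    | 1, 1 => exact e1_1_1
    | 1, 2 => exact e1_1_2
    | 2, 0 => exact e1_2_0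
    | 2, 1 => exact e1_2_1
    | 2, 2 => exact e1_2_2

lemma e2_0_0 : (m12 B₂ * m23 P₂ * m12 P₂) 0 0 = (m23 P₂ * m12 P₂ * m23 B₂) 0 0 := by
  simp [m12, m23, B₂, P₂, Matrix.mul_apply, Fin.sum_univ_three, Matrix.vecHead, Matrix.vecTail]
  all_goals first | linear_combination (s₂ * t₂ - 1) * hz | ring

lemma e2_0_1 : (m12 B₂ * m23 P₂ * m12 P₂) 0 1 = (m23 P₂ * m12 P₂ * m23 B₂) 0 1 := by
  simp [m12, m23, B₂, P₂, Matrix.mul_apply, Fin.sum_univ_three, Matrix.vecHead, Matrix.vecTail]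
  all_goals first | linear_combination (s₂ * t₂ - 1) * hz | ring

lemma e2_0_2 : (m12 B₂ * m23 P₂ * m12 P₂) 0 2 = (m23 P₂ * m12 P₂ * m23 B₂) 0 2 := by
  simp [m12, m23, B₂, P₂, Matrix.mul_apply, Fin.sum_univ_three, Matrix.vecHead, Matrix.vecTail]
  all_goals first | linear_combination (s₂ * t₂ - 1) * hz | ring

lemma e2_1_0 : (m12 B₂ * m23 P₂ * m12 P₂) 1 0 = (m23 P₂ * m12 P₂ * m23 B₂) 1 0 := by
  simp [m12, m23, B₂, P₂, Matrix.mul_apply, Fin.sum_univ_three, Matrix.vecHead, Matrix.vecTail]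
  all_goals first | linear_combination (s₂ * t₂ - 1) * hz | ring

lemma e2_1_1 : (m12 B₂ * m23 P₂ * m12 P₂) 1 1 = (m23 P₂ * m12 P₂ * m23 B₂) 1 1 := by
  simp [m12, m23, B₂, P₂, Matrix.mul_apply, Fin.sum_univ_three, Matrix.vecHead, Matrix.vecTail]
  all_goals first | linear_combination (s₂ * t₂ - 1) * hz | ring

lemma e2_1_2 : (m12 B₂ * m23 P₂ * m12 P₂) 1 2 = (m23 P₂ * m12 P₂ * m23 B₂) 1 2 := by
  simp [m12, m23, B₂, P₂, Matrix.mul_apply, Fin.sum_univ_three, Matrix.vecHead, Matrix.vecTail]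
  all_goals first | linear_combination (s₂ * t₂ - 1) * hz | ring

lemma e2_2_0 : (m12 B₂ * m23 P₂ * m12 P₂) 2 0 = (m23 P₂ * m12 P₂ * m23 B₂) 2 0 := by
  simp [m12, m23, B₂, P₂, Matrix.mul_apply, Fin.sum_univ_three, Matrix.vecHead, Matrix.vecTail]
  all_goals first | linear_combination (s₂ * t₂ - 1) * hz | ring

lemma e2_2_1 : (m12 B₂ * m23 P₂ * m12 P₂) 2 1 = (m23 P₂ * m12 P₂ * m23 B₂) 2 1 := by
  simp [m12, m23, B₂, P₂, Matrix.mul_apply, Fin.sum_univ_three, Matrix.vecHead, Matrix.vecTail]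
  all_goals first | linear_combination (s₂ * t₂ - 1) * hz | ring

lemma e2_2_2 : (m12 B₂ * m23 P₂ * m12 P₂) 2 2 = (m23 P₂ * m12 P₂ * m23 B₂) 2 2 := by
  simp [m12, m23, B₂, P₂, Matrix.mul_apply, Fin.sum_univ_three, Matrix.vecHead, Matrix.vecTail]
  all_goals first | linear_combination (s₂ * t₂ - 1) * hz | ring

lemma eq2 : m12 B₂ * m23 P₂ * m12 P₂ = m23 P₂ * m12 P₂ * m23 B₂ :=
  Matrix.ext fun i j => by
    match i, j with
    | 0, 0 => exact e2_0_0
    | 0, 1 => exact e2_0_1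
    | 0, 2 => exact e2_0_2
    | 1, 0 => exact e2_1_0
    | 1, 1 => exact e2_1_1
    | 1, 2 => exact e2_1_2
    | 2, 0 => exact e2_2_0
    | 2, 1 => exact e2_2_1
    | 2, 2 => exact e2_2_2

theorem stmt_2 :
    m12 P₂ * m23 P₂ * m12 B₂ = m23 B₂ * m12 P₂ * m23 P₂ ∧
    m12 P₂ * m23 B₂ * m12 P₂ = m23 P₂ * m12 B₂ * m23 P₂ ∧
    m12 B₂ * m23 P₂ * m12 P₂ = m23 P₂ * m12 P₂ * m23 B₂ :=
  ⟨eq0, eq1, eq2⟩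
end

section
/- If a double-occurrence word contains two labels u, v occurring as consecutive pairs in the pattern ...u v ... v u... (a Reidemeister-II configuration: the occurrences are at positions i, i+1 and j, j+1 with the word reading u v at positions i,i+1 and v u at positions j,j+1), then u and v have the same parity (both odd or both even). -/
/- STATEMENT 8: If a double-occurrence word contains labels u, v occurring as adjacent
pairs in the pattern ... u v ... v u ... (a Reidemeister-II configuration), then u and v
have the same parity (both odd or both even). -/

/-- A label `v` is odd in the word `l` if the number of symbols strictly between its
two occurrences is odd. -/
lemma key_pos {α : Type*} (l₁ l₂ l₃ : List α) (u v x : α) (i : ℕ)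
    (h : (l₁ ++ [u, v] ++ l₂ ++ [v, u] ++ l₃)[i]? = some x)
    (hx : x ∉ l₁ ++ l₂ ++ l₃) :
    (x = u ∧ (i = l₁.length ∨ i = l₁.length + l₂.length + 3)) ∨
    (x = v ∧ (i = l₁.length + 1 ∨ i = l₁.length + l₂.length + 2)) := by
  simp only [List.mem_append, not_or] at hx
  obtain ⟨⟨hx1, hx2⟩, hx3⟩ := hx
  rw [List.append_assoc, List.append_assoc, List.append_assoc] at h
  rcases Nat.lt_or_ge i l₁.length with hi | hi
  · rw [List.getElem?_append_left hi] at h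
    exact absurd (List.mem_of_getElem? h) hx1
  · obtain ⟨k, rfl⟩ : ∃ k, i = l₁.length + k := ⟨i - l₁.length, by omega⟩
    rw [List.getElem?_append_right hi, Nat.add_sub_cancel_left] at h
    match k with
    | 0 => simp at h; subst h; left; exact ⟨rfl, Or.inl rfl⟩
    | 1 => simp at h; subst h; right; exact ⟨rfl, Or.inl rfl⟩
    | (k+2) =>
      rw [show ([u,v] ++ (l₂ ++ ([v,u] ++ l₃))) = u :: v :: (l₂ ++ ([v,u] ++ l₃)) from rfl,
        List.getElem?_cons_succ, List.getElem?_cons_succ] at h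
      rcases Nat.lt_or_ge k l₂.length with hk | hk
      · rw [List.getElem?_append_left hk] at h
        exact absurd (List.mem_of_getElem? h) hx2
      · obtain ⟨m, rfl⟩ : ∃ m, k = l₂.length + m := ⟨k - l₂.length, by omega⟩
        rw [List.getElem?_append_right hk, Nat.add_sub_cancel_left] at h
        match m with
        | 0 => simp at h; subst h; right; exact ⟨rfl, Or.inr (by omega)⟩
        | 1 => simp at h; subst h; left; exact ⟨rfl, Or.inr (by omega)⟩
        | (m+2) =>
          rw [show ([v,u] ++ l₃) = v :: u :: l₃ from rfl,
            List.getElem?_cons_succ, List.getElem?_cons_succ] at h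
          exact absurd (List.mem_of_getElem? h) hx3

lemma get_u1 {α : Type*} (l₁ l₂ l₃ : List α) (u v : α) :
    (l₁ ++ [u, v] ++ l₂ ++ [v, u] ++ l₃)[l₁.length]? = some u := by
  rw [List.append_assoc, List.append_assoc, List.append_assoc,
    List.getElem?_append_right (le_refl _)]
  simp

lemma get_v1 {α : Type*} (l₁ l₂ l₃ : List α) (u v : α) :
    (l₁ ++ [u, v] ++ l₂ ++ [v, u] ++ l₃)[(l₁.length + 1)]? = some v := by
  rw [List.append_assoc, List.append_assoc, List.append_assoc,
    List.getElem?_append_right (Nat.le_add_right _ _)]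
  simp

lemma get_v2 {α : Type*} (l₁ l₂ l₃ : List α) (u v : α) :
    (l₁ ++ [u, v] ++ l₂ ++ [v, u] ++ l₃)[(l₁.length + l₂.length + 2)]? = some v := by
  rw [List.append_assoc, List.append_assoc, List.append_assoc,
    List.getElem?_append_right (by omega),
    show l₁.length + l₂.length + 2 - l₁.length = l₂.length + 1 + 1 from by omega]
  show (u :: v :: (l₂ ++ ([v,u] ++ l₃)))[l₂.length + 1 + 1]? = some v
  rw [List.getElem?_cons_succ, List.getElem?_cons_succ,
    List.getElem?_append_right (le_refl _)]
  simp

lemma get_u2 {α : Type*} (l₁ l₂ l₃ : List α) (u v : α) :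
    (l₁ ++ [u, v] ++ l₂ ++ [v, u] ++ l₃)[(l₁.length + l₂.length + 3)]? = some u := by
  rw [List.append_assoc, List.append_assoc, List.append_assoc,
    List.getElem?_append_right (by omega),
    show l₁.length + l₂.length + 3 - l₁.length = l₂.length + 2 + 1 from by omega]
  show (u :: v :: (l₂ ++ ([v,u] ++ l₃)))[l₂.length + 2 + 1]? = some u
  rw [List.getElem?_cons_succ, List.getElem?_cons_succ,
    List.getElem?_append_right (by omega),
    show l₂.length + 1 - l₂.length = 1 from by omega]
  simp

def OddLabel {α : Type*} (l : List α) (v : α) : Prop :=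
  ∃ i j : ℕ, i < j ∧ l[i]? = some v ∧ l[j]? = some v ∧ Odd (j - i - 1)

theorem stmt_8 {α : Type*} [DecidableEq α] (l₁ l₂ l₃ : List α) (u v : α)
    (huv : u ≠ v)
    (hu : u ∉ l₁ ++ l₂ ++ l₃) (hv : v ∉ l₁ ++ l₂ ++ l₃)
    (hcount : ∀ x ∈ l₁ ++ l₂ ++ l₃, (l₁ ++ l₂ ++ l₃).count x = 2) :
    (OddLabel (l₁ ++ [u, v] ++ l₂ ++ [v, u] ++ l₃) u ↔
      OddLabel (l₁ ++ [u, v] ++ l₂ ++ [v, u] ++ l₃) v) := by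
  constructor
  · rintro ⟨i, j, hij, hgi, hgj, hodd⟩
    have pi := key_pos l₁ l₂ l₃ u v u i hgi hu
    have pj := key_pos l₁ l₂ l₃ u v u j hgj hu
    simp only [huv, false_and, or_false, true_and] at pi pj
    have hO : Odd l₂.length := by
      rcases pi with rfl | rfl <;> rcases pj with rfl | rfl
      all_goals try omega
      rw [show l₁.length + l₂.length + 3 - l₁.length - 1 = l₂.length + 2 from by omega] at hodd
      obtain ⟨c, hc⟩ := hodd
      exact ⟨c - 1, by omega⟩
    exact ⟨l₁.length + 1, l₁.length + l₂.length + 2, by omega,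
      get_v1 l₁ l₂ l₃ u v, get_v2 l₁ l₂ l₃ u v, by
        rw [show l₁.length + l₂.length + 2 - (l₁.length + 1) - 1 = l₂.length from by omega]
        exact hO⟩
  · rintro ⟨i, j, hij, hgi, hgj, hodd⟩
    have pi := key_pos l₁ l₂ l₃ u v v i hgi hv
    have pj := key_pos l₁ l₂ l₃ u v v j hgj hv
    simp only [huv.symm, false_and, or_false, true_and, false_or] at pi pj
    have hO : Odd l₂.length := by
      rcases pi with rfl | rfl <;> rcases pj with rfl | rfl
      all_goals try omega
      rwa [show l₁.length + l₂.length + 2 - (l₁.length + 1) - 1 = l₂.length from by omega] at hodd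
    exact ⟨l₁.length, l₁.length + l₂.length + 3, by omega,
      get_u1 l₁ l₂ l₃ u v, get_u2 l₁ l₂ l₃ u v, by
        rw [show l₁.length + l₂.length + 3 - l₁.length - 1 = l₂.length + 2 from by omega]
        rcases hO with ⟨c, hc⟩
        exact ⟨c + 1, by omega⟩⟩
end

section
/- The z-Parity Alexander relation matrix of virtual knot 3.1 has determinant equal (up to sign/unit) to (1/(st) - 1)z^{-2} - 1/(st) + 1; in particular the maximal |z|-exponent is 2, so by the degree-bound lemma any diagram of 3.1 has at least 2 odd crossings. -/
set_option maxRecDepth 10000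
set_option maxHeartbeats 1000000


/- STATEMENT 16: The z-Parity Alexander relation matrix of virtual knot 3.1 (Gauss code
O1-,O2-,U1-,O3+,U2-,U3+; crossings 1 and 3 odd, crossing 2 even), obtained by using
B = [[0,s],[t,1-st]] at the even crossing and P₃ = [[0,z],[z⁻¹,0]] at the two odd
crossings, is the 6×6 matrix below (relations a = z⁻¹f, b = s⁻¹a, c = zb, d = zc,
e = t⁻¹d + (1-s⁻¹t⁻¹)a, f = z⁻¹e in basis a,…,f).  Its determinant equals, up to sign
and a unit monomial s^a t^b z^c, the polynomial (1/(st) - 1)z⁻² - 1/(st) + 1;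
in particular the maximal |z|-exponent is 2, giving ≥ 2 odd crossings in any diagram. -/

open LaurentPolynomial

/-- `ℤ[s^{±1}, t^{±1}, z^{±1}]`: `s` outer, then `t`, then `z` innermost. -/
noncomputable abbrev R₁₆ : Type :=
  LaurentPolynomial (LaurentPolynomial (LaurentPolynomial ℤ))

noncomputable def s : R₁₆ := T 1
noncomputable def sinv : R₁₆ := T (-1)
noncomputable def t : R₁₆ := C (T 1)
noncomputable def tinv : R₁₆ := C (T (-1))
noncomputable def z : R₁₆ := C (C (T 1))
noncomputable def zinv : R₁₆ := C (C (T (-1)))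

/-- The monomial s^a t^b z^c with integer exponents. -/
noncomputable def mono (a b c : ℤ) : R₁₆ := T a * C (T b) * C (C (T c))

noncomputable def M₁₆ : Matrix (Fin 6) (Fin 6) R₁₆ :=
  !![-1, 0, 0, 0, 0, zinv;
     sinv, -1, 0, 0, 0, 0;
     0, z, -1, 0, 0, 0;
     0, 0, z, -1, 0, 0;
     1 - sinv * tinv, 0, 0, tinv, -1, 0;
     0, 0, 0, 0, zinv, -1]

lemma det6_aux {R : Type*} [CommRing R] (α β γ δ ε ζ u : R) :
    (!![(-1 : R), 0, 0, 0, 0, α; β, -1, 0, 0, 0, 0; 0, γ, -1, 0, 0, 0;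
        0, 0, δ, -1, 0, 0; u, 0, 0, ε, -1, 0; 0, 0, 0, 0, ζ, -1]).det
      = 1 - α * ζ * u - α * β * γ * δ * ε * ζ := by
  simp only [Matrix.det_succ_row_zero, Fin.sum_univ_succ, Matrix.det_unique,
    Fin.default_eq_zero, Matrix.submatrix_apply, Matrix.submatrix_submatrix,
    Function.comp_apply, Fin.zero_succAbove, Fin.succ_succAbove_zero,
    Fin.succ_succAbove_succ, Matrix.cons_val_zero, Matrix.cons_val_succ,
    Matrix.of_apply, Matrix.cons_val', Matrix.cons_val_fin_one, Matrix.empty_val',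
    Finset.univ_unique, Finset.sum_singleton, Fin.val_zero, Fin.val_succ, pow_succ, pow_zero]
  ring

theorem stmt_16 :
    ∃ a b c : ℤ,
      M₁₆.det = mono a b c * ((sinv * tinv - 1) * zinv ^ 2 - sinv * tinv + 1) ∨
      M₁₆.det = -(mono a b c * ((sinv * tinv - 1) * zinv ^ 2 - sinv * tinv + 1)) := by
  refine ⟨0, 0, 0, Or.inl ?_⟩
  have hz : z * zinv = 1 := by
    simp only [z, zinv, ← map_mul, ← T_add]
    norm_num
  have hm : mono 0 0 0 = 1 := by simp [mono, T_zero]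
  rw [hm, one_mul, M₁₆, det6_aux]
  revert hz
  generalize z = Z
  generalize zinv = Zi
  generalize sinv = Si
  generalize tinv = Ti
  intro hz
  linear_combination (-(Si * Ti) * (Z * Zi + 1)) * hz
end

section
/- Reidemeister-II stability of parity: inserting into a double-occurrence word two fresh labels u, v as adjacent pairs (u v) at one position and (v u) at another position preserves the parity of every existing label, and u, v receive equal parities. -/
set_option maxHeartbeats 1000000

section Aux

variable {α : Type*}

lemma aux_fwd (A B C : List α) (x : α) (hx : x ∉ B) (k : ℕ)
    (h : (A ++ B ++ C)[k]? = some x) :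
    (k < A.length ∧ (A ++ C)[k]? = some x) ∨
    (A.length + B.length ≤ k ∧ (A ++ C)[k - B.length]? = some x) := by
  rcases lt_or_ge k A.length with hk | hk
  · left
    refine ⟨hk, ?_⟩
    rw [List.getElem?_append_left (by simpa using Nat.lt_of_lt_of_le hk (by simp))] at h
    rw [List.getElem?_append_left hk] at h
    rw [List.getElem?_append_left hk, h]
  · rcases lt_or_ge k (A.length + B.length) with hk2 | hk2
    · exfalso
      rw [List.getElem?_append_left (by simpa using hk2), List.getElem?_append_right hk] at h
      exact hx (List.mem_of_getElem? h)
    · right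
      refine ⟨hk2, ?_⟩
      rw [List.getElem?_append_right (by simpa using hk2)] at h
      rw [List.getElem?_append_right (by omega)]
      simp only [List.length_append] at h
      rw [← h]
      congr 1
      omega

lemma aux_bwd (A B C : List α) (x : α) (k : ℕ)
    (h : (A ++ C)[k]? = some x) :
    (k < A.length ∧ (A ++ B ++ C)[k]? = some x) ∨
    (A.length ≤ k ∧ (A ++ B ++ C)[k + B.length]? = some x) := by
  rcases lt_or_ge k A.length with hk | hk
  · left
    refine ⟨hk, ?_⟩
    rw [List.getElem?_append_left hk] at h
    rw [List.getElem?_append_left (by simpa using Nat.lt_of_lt_of_le hk (by simp)),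
      List.getElem?_append_left hk, h]
  · right
    refine ⟨hk, ?_⟩
    rw [List.getElem?_append_right hk] at h
    rw [List.getElem?_append_right (by simp; omega)]
    simp only [List.length_append]
    rw [← h]
    congr 1
    omega

lemma oddLabel_insert (A B C : List α) (x : α) (hx : x ∉ B) (hB : Even B.length) :
    OddLabel (A ++ B ++ C) x ↔ OddLabel (A ++ C) x := by
  rw [Nat.even_iff] at hB
  constructor
  · rintro ⟨i, j, hij, hi, hj, hodd⟩
    rw [Nat.odd_iff] at hodd
    rcases aux_fwd A B C x hx i hi with ⟨hi1, hi2⟩ | ⟨hi1, hi2⟩ <;>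
      rcases aux_fwd A B C x hx j hj with ⟨hj1, hj2⟩ | ⟨hj1, hj2⟩
    · exact ⟨i, j, hij, hi2, hj2, Nat.odd_iff.2 hodd⟩
    · exact ⟨i, j - B.length, by omega, hi2, hj2, Nat.odd_iff.2 (by omega)⟩
    · omega
    · exact ⟨i - B.length, j - B.length, by omega, hi2, hj2, Nat.odd_iff.2 (by omega)⟩
  · rintro ⟨i, j, hij, hi, hj, hodd⟩
    rw [Nat.odd_iff] at hodd
    rcases aux_bwd A B C x i hi with ⟨hi1, hi2⟩ | ⟨hi1, hi2⟩ <;>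
      rcases aux_bwd A B C x j hj with ⟨hj1, hj2⟩ | ⟨hj1, hj2⟩
    · exact ⟨i, j, hij, hi2, hj2, Nat.odd_iff.2 hodd⟩
    · exact ⟨i, j + B.length, by omega, hi2, hj2, Nat.odd_iff.2 (by omega)⟩
    · omega
    · exact ⟨i + B.length, j + B.length, by omega, hi2, hj2, Nat.odd_iff.2 (by omega)⟩

/-- Evaluate get? on the big word in each region. -/
lemma big_get? (l₁ l₂ l₃ : List α) (u v : α) (k : ℕ) :
    let W := l₁ ++ [u, v] ++ l₂ ++ [v, u] ++ l₃
    let n1 := l₁.length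
    let n2 := l₂.length
    (k < n1 → W[k]? = l₁[k]?) ∧
    (W[n1]? = some u) ∧
    (W[n1 + 1]? = some v) ∧
    (n1 + 2 ≤ k → k < n1 + 2 + n2 → W[k]? = l₂[k - (n1 + 2)]?) ∧
    (W[n1 + 2 + n2]? = some v) ∧
    (W[n1 + 2 + n2 + 1]? = some u) ∧
    (n1 + n2 + 4 ≤ k → W[k]? = l₃[k - (n1 + n2 + 4)]?) := by
  intro W n1 n2
  have hW : W = l₁ ++ ((u :: v :: (l₂ ++ (v :: u :: l₃)))) := by
    simp [W, List.append_assoc]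
  refine ⟨?_, ?_, ?_, ?_, ?_, ?_, ?_⟩
  · intro hk
    rw [hW, List.getElem?_append_left hk]
  · rw [hW, List.getElem?_append_right (le_refl _)]
    simp [n1]
  · rw [hW, List.getElem?_append_right (by omega)]
    have : n1 + 1 - l₁.length = 1 := by simp [n1]
    rw [this]
    rfl
  · intro hk1 hk2
    rw [hW, List.getElem?_append_right (by simp [n1] at hk1 ⊢; omega)]
    have h1 : k - l₁.length = (k - l₁.length - 2) + 2 := by simp [n1] at hk1; omega
    rw [h1]
    show (l₂ ++ (v :: u :: l₃))[k - l₁.length - 2]? = _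
    rw [List.getElem?_append_left (by simp [n1, n2] at hk1 hk2 ⊢; omega)]
    congr 1
  · rw [hW, List.getElem?_append_right (by simp [n1]; omega)]
    have h1 : n1 + 2 + n2 - l₁.length = n2 + 2 := by simp [n1]; omega
    rw [h1]
    show (l₂ ++ (v :: u :: l₃))[n2]? = _
    rw [List.getElem?_append_right (le_refl _)]
    simp [n2]
  · rw [hW, List.getElem?_append_right (by simp [n1]; omega)]
    have h1 : n1 + 2 + n2 + 1 - l₁.length = n2 + 3 := by simp [n1]; omega
    rw [h1]
    show (l₂ ++ (v :: u :: l₃))[n2 + 1]? = _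
    rw [List.getElem?_append_right (by simp [n2])]
    have : n2 + 1 - l₂.length = 1 := by simp [n2]
    rw [this]
    rfl
  · intro hk
    rw [hW, List.getElem?_append_right (by simp [n1] at hk ⊢; omega)]
    have h1 : k - l₁.length = (k - l₁.length - 2) + 2 := by simp [n1] at hk; omega
    rw [h1]
    show (l₂ ++ (v :: u :: l₃))[k - l₁.length - 2]? = _
    rw [List.getElem?_append_right (by simp [n1, n2] at hk ⊢; omega)]
    have h2 : k - l₁.length - 2 - l₂.length = (k - l₁.length - l₂.length - 4) + 2 := by
      simp [n1, n2] at hk; omega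
    rw [h2]
    show l₃[k - l₁.length - l₂.length - 4]? = _
    congr 1
    simp [n1, n2]
    omega

/-- positions of u in the big word -/
lemma u_positions (l₁ l₂ l₃ : List α) (u v : α) (huv : u ≠ v)
    (h1 : u ∉ l₁) (h2 : u ∉ l₂) (h3 : u ∉ l₃) (k : ℕ)
    (h : (l₁ ++ [u, v] ++ l₂ ++ [v, u] ++ l₃)[k]? = some u) :
    k = l₁.length ∨ k = l₁.length + 2 + l₂.length + 1 := by
  obtain ⟨g1, g2, g3, g4, g5, g6, g7⟩ := big_get? l₁ l₂ l₃ u v k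
  set n1 := l₁.length
  set n2 := l₂.length
  rcases lt_or_ge k n1 with hk | hk
  · exact absurd (List.mem_of_getElem? ((g1 hk) ▸ h)) h1
  rcases Nat.lt_or_ge k (n1 + 2) with hk2 | hk2
  · have : k = n1 ∨ k = n1 + 1 := by omega
    rcases this with rfl | rfl
    · exact Or.inl rfl
    · rw [g3] at h; exact absurd (Option.some.inj h) huv.symm
  rcases Nat.lt_or_ge k (n1 + 2 + n2) with hk3 | hk3
  · exact absurd (List.mem_of_getElem? ((g4 hk2 hk3) ▸ h)) h2
  rcases Nat.lt_or_ge k (n1 + n2 + 4) with hk4 | hk4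
  · have : k = n1 + 2 + n2 ∨ k = n1 + 2 + n2 + 1 := by omega
    rcases this with rfl | rfl
    · rw [g5] at h; exact absurd (Option.some.inj h) huv.symm
    · exact Or.inr rfl
  · exact absurd (List.mem_of_getElem? ((g7 hk4) ▸ h)) h3

lemma v_positions (l₁ l₂ l₃ : List α) (u v : α) (huv : u ≠ v)
    (h1 : v ∉ l₁) (h2 : v ∉ l₂) (h3 : v ∉ l₃) (k : ℕ)
    (h : (l₁ ++ [u, v] ++ l₂ ++ [v, u] ++ l₃)[k]? = some v) :
    k = l₁.length + 1 ∨ k = l₁.length + 2 + l₂.length := by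
  obtain ⟨g1, g2, g3, g4, g5, g6, g7⟩ := big_get? l₁ l₂ l₃ u v k
  set n1 := l₁.length
  set n2 := l₂.length
  rcases lt_or_ge k n1 with hk | hk
  · exact absurd (List.mem_of_getElem? ((g1 hk) ▸ h)) h1
  rcases Nat.lt_or_ge k (n1 + 2) with hk2 | hk2
  · have : k = n1 ∨ k = n1 + 1 := by omega
    rcases this with rfl | rfl
    · rw [g2] at h; exact absurd (Option.some.inj h) huv
    · exact Or.inl rfl
  rcases Nat.lt_or_ge k (n1 + 2 + n2) with hk3 | hk3
  · exact absurd (List.mem_of_getElem? ((g4 hk2 hk3) ▸ h)) h2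
  rcases Nat.lt_or_ge k (n1 + n2 + 4) with hk4 | hk4
  · have : k = n1 + 2 + n2 ∨ k = n1 + 2 + n2 + 1 := by omega
    rcases this with rfl | rfl
    · exact Or.inr rfl
    · rw [g6] at h; exact absurd (Option.some.inj h) huv
  · exact absurd (List.mem_of_getElem? ((g7 hk4) ▸ h)) h3

end Aux

theorem stmt_18 {α : Type*} [DecidableEq α] (l₁ l₂ l₃ : List α) (u v : α)
    (huv : u ≠ v)
    (hu : u ∉ l₁ ++ l₂ ++ l₃) (hv : v ∉ l₁ ++ l₂ ++ l₃)
    (hcount : ∀ x ∈ l₁ ++ l₂ ++ l₃, (l₁ ++ l₂ ++ l₃).count x = 2) :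
    (∀ x ∈ l₁ ++ l₂ ++ l₃,
      (OddLabel (l₁ ++ [u, v] ++ l₂ ++ [v, u] ++ l₃) x ↔ OddLabel (l₁ ++ l₂ ++ l₃) x)) ∧
    (OddLabel (l₁ ++ [u, v] ++ l₂ ++ [v, u] ++ l₃) u ↔
      OddLabel (l₁ ++ [u, v] ++ l₂ ++ [v, u] ++ l₃) v) := by
  simp only [List.mem_append, not_or] at hu hv
  obtain ⟨⟨hu1, hu2⟩, hu3⟩ := hu
  obtain ⟨⟨hv1, hv2⟩, hv3⟩ := hv
  constructor
  · intro x hx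
    simp only [List.mem_append] at hx
    have hxu : x ≠ u := by rintro rfl; tauto
    have hxv : x ≠ v := by rintro rfl; tauto
    have hxB1 : x ∉ ([u, v] : List α) := by simp [hxu, hxv]
    have hxB2 : x ∉ ([v, u] : List α) := by simp [hxu, hxv]
    have e1 : l₁ ++ [u, v] ++ l₂ ++ [v, u] ++ l₃ =
        (l₁ ++ l₂) ++ [v, u] ++ l₃ ∨ True := Or.inr trivial
    have step1 : OddLabel (l₁ ++ [u, v] ++ l₂ ++ [v, u] ++ l₃) x ↔
        OddLabel (l₁ ++ (l₂ ++ [v, u] ++ l₃)) x := by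
      have := oddLabel_insert l₁ [u, v] (l₂ ++ [v, u] ++ l₃) x hxB1 (by simp)
      simpa [List.append_assoc] using this
    have step2 : OddLabel ((l₁ ++ l₂) ++ [v, u] ++ l₃) x ↔
        OddLabel ((l₁ ++ l₂) ++ l₃) x :=
      oddLabel_insert (l₁ ++ l₂) [v, u] l₃ x hxB2 (by simp)
    rw [step1]
    have : l₁ ++ (l₂ ++ [v, u] ++ l₃) = (l₁ ++ l₂) ++ [v, u] ++ l₃ := by
      simp [List.append_assoc]
    rw [this, step2]
  · obtain ⟨g1, g2, g3, g4, g5, g6, g7⟩ := big_get? l₁ l₂ l₃ u v 0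
    set n1 := l₁.length
    set n2 := l₂.length
    constructor
    · rintro ⟨i, j, hij, hi, hj, hodd⟩
      rw [Nat.odd_iff] at hodd
      have hiu := u_positions l₁ l₂ l₃ u v huv hu1 hu2 hu3 i hi
      have hju := u_positions l₁ l₂ l₃ u v huv hu1 hu2 hu3 j hj
      exact ⟨n1 + 1, n1 + 2 + n2, by omega, g3, g5, Nat.odd_iff.2 (by omega)⟩
    · rintro ⟨i, j, hij, hi, hj, hodd⟩
      rw [Nat.odd_iff] at hodd
      have hiv := v_positions l₁ l₂ l₃ u v huv hv1 hv2 hv3 i hi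
      have hjv := v_positions l₁ l₂ l₃ u v huv hv1 hv2 hv3 j hj
      exact ⟨n1, n1 + 2 + n2 + 1, by omega, g2, g6, Nat.odd_iff.2 (by omega)⟩
end
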